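/- For any $j \neq k$, the commutator of the projection $p_k$ (onto $\phi$ in coordinate $k$) with multiplication by the indicator of $a_{j,k}^{(d)} = \{|x_j - x_k| < N^{-d}\}$ satisfies $\|[\mathds{1}_{a_{j,k}^{(d)}}, p_k]\|_{\mathrm{op}} \le C\|\phi\|_\infty N^{-d}$. -/

import Mathlib

open MeasureTheory Function
open scoped ENNReal NNReal

noncomputable section

abbrev Vec : Type := EuclideanSpace ℝ (Fin 2)

/-- Projection onto `φ` in the `k`-th coordinate of `L²(ℝ^{2N})`, at the level of functions. -/
noncomputable def pA (N : ℕ) (φ : Vec → ℂ) (k : Fin N) (Ψ : (Fin N → Vec) → ℂ) :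
    (Fin N → Vec) → ℂ :=
  fun x => φ (x k) * ∫ y : Vec, (starRingEnd ℂ) (φ y) * Ψ (Function.update x k y)

lemma aux_sq_add (s t : ℝ≥0∞) : (s + t) ^ (2:ℝ) ≤ 4 * (s ^ (2:ℝ) + t ^ (2:ℝ)) := by
  rw [ENNReal.rpow_two, ENNReal.rpow_two, ENNReal.rpow_two]
  calc (s + t) ^ 2 ≤ (max s t + max s t) ^ 2 := by
        gcongr <;> [exact le_max_left _ _; exact le_max_right _ _]
    _ = 4 * (max s t) ^ 2 := by ring
    _ ≤ 4 * (s ^ 2 + t ^ 2) := by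
        gcongr
        rcases max_cases s t with ⟨h, _⟩ | ⟨h, _⟩ <;> rw [h]
        · exact le_self_add
        · exact le_add_self

lemma aux_cs {α : Type*} [MeasurableSpace α] (μ : Measure α) (w v : α → ℂ)
    (hw : AEMeasurable (fun y => (‖w y‖₊ : ℝ≥0∞)) μ)
    (hv : AEMeasurable (fun y => (‖v y‖₊ : ℝ≥0∞)) μ) :
    (‖∫ y, w y * v y ∂μ‖₊ : ℝ≥0∞) ^ (2:ℝ)
      ≤ (∫⁻ y, (‖w y‖₊ : ℝ≥0∞) ^ (2:ℝ) ∂μ) * ∫⁻ y, (‖v y‖₊ : ℝ≥0∞) ^ (2:ℝ) ∂μ := by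
  have h1 : (‖∫ y, w y * v y ∂μ‖₊ : ℝ≥0∞) ≤ ∫⁻ y, (‖w y‖₊ : ℝ≥0∞) * ‖v y‖₊ ∂μ := by
    refine (enorm_integral_le_lintegral_enorm _).trans_eq ?_
    simp [nnnorm_mul]
    rfl
  have h2 : (∫⁻ y, (‖w y‖₊ : ℝ≥0∞) * ‖v y‖₊ ∂μ)
      ≤ (∫⁻ y, (‖w y‖₊ : ℝ≥0∞) ^ (2:ℝ) ∂μ) ^ (1/(2:ℝ))
        * (∫⁻ y, (‖v y‖₊ : ℝ≥0∞) ^ (2:ℝ) ∂μ) ^ (1/(2:ℝ)) :=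
    ENNReal.lintegral_mul_le_Lp_mul_Lq μ Real.HolderConjugate.two_two hw hv
  calc (‖∫ y, w y * v y ∂μ‖₊ : ℝ≥0∞) ^ (2:ℝ)
      ≤ ((∫⁻ y, (‖w y‖₊ : ℝ≥0∞) ^ (2:ℝ) ∂μ) ^ (1/(2:ℝ))
        * (∫⁻ y, (‖v y‖₊ : ℝ≥0∞) ^ (2:ℝ) ∂μ) ^ (1/(2:ℝ))) ^ (2:ℝ) :=
        ENNReal.rpow_le_rpow (h1.trans h2) two_pos.le
    _ = _ := by
        rw [ENNReal.mul_rpow_of_nonneg _ _ two_pos.le, ← ENNReal.rpow_mul, ← ENNReal.rpow_mul]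
        norm_num

lemma aux_ball (a : Vec) (r : ℝ) (hr : 0 ≤ r) :
    volume (Metric.ball a r) ≤ ENNReal.ofReal (4 * r ^ 2) := by
  rw [EuclideanSpace.volume_ball]
  rw [show Fintype.card (Fin 2) = 2 from by simp]
  have h2 : Real.sqrt Real.pi ^ 2 / Real.Gamma (((2:ℕ):ℝ) / 2 + 1) = Real.pi := by
    rw [Real.sq_sqrt Real.pi_pos.le]
    norm_num [Real.Gamma_two]
  rw [h2]
  calc ENNReal.ofReal r ^ 2 * ENNReal.ofReal Real.pi
      ≤ ENNReal.ofReal r ^ 2 * ENNReal.ofReal 4 := by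
        gcongr
        exact Real.pi_le_four
    _ = ENNReal.ofReal (4 * r ^ 2) := by
        rw [← ENNReal.ofReal_pow hr, ← ENNReal.ofReal_mul (by positivity)]
        ring_nf

/-- For `j ≠ k`, the commutator of `p_k` with multiplication by the indicator of
`a_{j,k}^{(d)} = {|x_j - x_k| < N^{-d}}` has operator norm `≤ C ‖φ‖∞ N^{-d}`. -/
theorem stmt_12 :
    ∃ C > (0 : ℝ), ∀ (N : ℕ) (d : ℝ), 0 < d → ∀ j k : Fin N, j ≠ k →
    ∀ (φ : Vec → ℂ) (Cφ : ℝ), MemLp φ 2 volume →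
      (∫ y : Vec, ‖φ y‖ ^ 2) = 1 → (∀ y, ‖φ y‖ ≤ Cφ) →
    ∀ Ψ : (Fin N → Vec) → ℂ, MemLp Ψ 2 volume →
      eLpNorm (fun x : Fin N → Vec =>
          (if ‖x j - x k‖ < (N : ℝ) ^ (-d) then (1 : ℂ) else 0) * pA N φ k Ψ x
            - pA N φ k
                (fun z => (if ‖z j - z k‖ < (N : ℝ) ^ (-d) then (1 : ℂ) else 0) * Ψ z) x)
          2 volume
        ≤ ENNReal.ofReal (C * Cφ * (N : ℝ) ^ (-d)) * eLpNorm Ψ 2 volume := by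
  classical
  refine ⟨6, by norm_num, ?_⟩
  intro N d hd j k hjk φ Cφ hφp hφ2 hCφ Ψ hΨ
  obtain ⟨n, rfl⟩ : ∃ n, N = n + 1 := ⟨N - 1, by have := j.pos; omega⟩
  set r : ℝ := ((n + 1 : ℕ) : ℝ) ^ (-d) with hr_def
  have hr0 : 0 < r := Real.rpow_pos_of_pos (by positivity) _
  have hCφ0 : 0 ≤ Cφ := le_trans (norm_nonneg _) (hCφ 0)
  obtain ⟨j', hj'⟩ := Fin.exists_succAbove_eq hjk
  -- measure-preserving equivalences
  let e : (Fin (n+1) → Vec) ≃ᵐ Vec × (Fin n → Vec) :=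
    MeasurableEquiv.piFinSuccAbove (fun _ => Vec) k
  have mp : MeasurePreserving e (volume : Measure (Fin (n+1) → Vec))
      ((volume : Measure Vec).prod (volume : Measure (Fin n → Vec))) :=
    measurePreserving_piFinSuccAbove (fun _ : Fin (n+1) => (volume : Measure Vec)) k
  let em : (Fin n → Vec) × Vec ≃ᵐ (Fin (n+1) → Vec) :=
    (MeasurableEquiv.prodComm : ((Fin n → Vec) × Vec) ≃ᵐ (Vec × (Fin n → Vec))).trans e.symm
  have mpem : MeasurePreserving em
      (((volume : Measure (Fin n → Vec))).prod (volume : Measure Vec))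
      (volume : Measure (Fin (n+1) → Vec)) :=
    (MeasurePreserving.symm e mp).comp Measure.measurePreserving_swap
  have em_apply : ∀ (z : Fin n → Vec) (y : Vec), em (z, y) = k.insertNth y z := fun _ _ => rfl
  have hx_eq : ∀ (x : Fin (n+1) → Vec) (y : Vec),
      Function.update x k y = k.insertNth y ((e x).2) := by
    intro x y
    conv_lhs => rw [← Fin.insertNth_self_removeNth k x]
    rw [Fin.update_insertNth]
    rfl
  -- measurable representative of Ψ
  set Ψm : (Fin (n+1) → Vec) → ℂ := hΨ.1.mk Ψ with hΨm_def
  have hΨsm : StronglyMeasurable Ψm := hΨ.1.stronglyMeasurable_mk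
  have hae : Ψ =ᵐ[volume] Ψm := hΨ.1.ae_eq_mk
  have hφsm : AEStronglyMeasurable φ volume := hφp.1
  -- a.e. replacement of Ψ by Ψm inside sections
  have hZae : ∀ᵐ z : Fin n → Vec ∂volume,
      (fun y' => Ψ (k.insertNth y' z)) =ᵐ[volume] (fun y' => Ψm (k.insertNth y' z)) := by
    have h0 : ∀ᵐ p : (Fin n → Vec) × Vec ∂((volume : Measure (Fin n → Vec)).prod volume),
        Ψ (em p) = Ψm (em p) := mpem.quasiMeasurePreserving.ae hae
    exact Measure.ae_ae_of_ae_prod h0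
  have h_good : ∀ᵐ x : Fin (n+1) → Vec ∂volume,
      (fun y' => Ψ (Function.update x k y')) =ᵐ[volume]
        (fun y' => Ψm (Function.update x k y')) := by
    have hq : Measure.QuasiMeasurePreserving (fun x : Fin (n+1) → Vec => (e x).2)
        volume volume :=
      Measure.quasiMeasurePreserving_snd.comp mp.quasiMeasurePreserving
    filter_upwards [hq.ae hZae] with x hx
    filter_upwards [hx] with y' hy'
    rw [hx_eq x y']
    exact hy'
  -- replace Ψ by Ψm in the goal
  have hcong : (fun x : Fin (n+1) → Vec =>
        (if ‖x j - x k‖ < r then (1:ℂ) else 0) * pA (n+1) φ k Ψ x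
          - pA (n+1) φ k (fun z => (if ‖z j - z k‖ < r then (1:ℂ) else 0) * Ψ z) x)
      =ᵐ[volume] (fun x =>
        (if ‖x j - x k‖ < r then (1:ℂ) else 0) * pA (n+1) φ k Ψm x
          - pA (n+1) φ k (fun z => (if ‖z j - z k‖ < r then (1:ℂ) else 0) * Ψm z) x) := by
    filter_upwards [h_good] with x hx
    have h1 : pA (n+1) φ k Ψ x = pA (n+1) φ k Ψm x := by
      unfold pA
      congr 1
      refine integral_congr_ae ?_
      filter_upwards [hx] with y hy
      rw [hy]
    have h2 : pA (n+1) φ k (fun z => (if ‖z j - z k‖ < r then (1:ℂ) else 0) * Ψ z) x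
        = pA (n+1) φ k (fun z => (if ‖z j - z k‖ < r then (1:ℂ) else 0) * Ψm z) x := by
      unfold pA
      congr 1
      refine integral_congr_ae ?_
      filter_upwards [hx] with y hy
      simp only [hy]
    rw [h1, h2]
  rw [eLpNorm_congr_ae hcong]
  -- basic quantities
  set Gm : (Fin n → Vec) → ℂ :=
    fun z => ∫ y', (starRingEnd ℂ) (φ y') * Ψm (k.insertNth y' z) with hGm_def
  set Hm : (Fin n → Vec) → ℂ :=
    fun z => ∫ y', (starRingEnd ℂ) (φ y')
      * ((if ‖z j' - y'‖ < r then (1:ℂ) else 0) * Ψm (k.insertNth y' z)) with hHm_def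
  set I : (Fin n → Vec) → ℝ≥0∞ :=
    fun z => ∫⁻ y', (‖Ψm (k.insertNth y' z)‖₊ : ℝ≥0∞) ^ (2:ℝ) with hI_def
  set B : ℝ≥0∞ := ENNReal.ofReal (Cφ^2 * (4 * r^2)) with hB_def
  have hBne : B ≠ ∞ := ENNReal.ofReal_ne_top
  have hφ1 : (∫⁻ y, (‖φ y‖₊ : ℝ≥0∞) ^ (2:ℝ)) = 1 := by
    have hint : Integrable (fun y => ‖φ y‖ ^ 2) volume := by
      have := hφp.integrable_norm_rpow (by norm_num) ENNReal.ofNat_ne_top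
      simpa [ENNReal.toReal_ofNat, Real.rpow_two] using this
    have h0 : ENNReal.ofReal (∫ y, ‖φ y‖ ^ 2) = ∫⁻ y, ENNReal.ofReal (‖φ y‖ ^ 2) :=
      ofReal_integral_eq_lintegral_ofReal hint (Filter.Eventually.of_forall fun y => sq_nonneg _)
    rw [hφ2] at h0
    have hpt : ∀ y : Vec, (‖φ y‖₊ : ℝ≥0∞) ^ (2:ℝ) = ENNReal.ofReal (‖φ y‖ ^ 2) := by
      intro y
      rw [← enorm_eq_nnnorm, ← ofReal_norm,
        ENNReal.ofReal_rpow_of_nonneg (norm_nonneg _) (by norm_num), Real.rpow_two]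
    simp_rw [hpt]
    rw [← h0]
    norm_num
  -- measurability package
  have hins : ∀ z : Fin n → Vec,
      Measurable (fun y' : Vec => (k.insertNth y' z : Fin (n+1) → Vec)) := by
    intro z
    have h : Measurable (fun y' : Vec => em (z, y')) :=
      em.measurable.comp measurable_prodMk_left
    exact h
  have hφnnAEM : AEMeasurable (fun y => (‖φ y‖₊ : ℝ≥0∞)) volume := hφsm.enorm
  have hφ2AEM : AEMeasurable (fun y => (‖φ y‖₊ : ℝ≥0∞) ^ (2:ℝ)) volume := hφnnAEM.pow_const _
  have hconjAEM : AEMeasurable (fun y => (‖(starRingEnd ℂ) (φ y)‖₊ : ℝ≥0∞)) volume := by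
    simpa using hφnnAEM
  have hΨvAEM : ∀ z, AEMeasurable (fun y' => (‖Ψm (k.insertNth y' z)‖₊ : ℝ≥0∞)) volume :=
    fun z => ((hΨsm.measurable.comp (hins z)).nnnorm.coe_nnreal_ennreal).aemeasurable
  have hball : ∀ a : Vec,
      (∫⁻ y, (if ‖a - y‖ < r then (1:ℝ≥0∞) else 0) * (‖φ y‖₊ : ℝ≥0∞) ^ (2:ℝ)) ≤ B := by
    intro a
    have hset : ∀ y : Vec, (if ‖a - y‖ < r then (1:ℝ≥0∞) else 0) * (‖φ y‖₊ : ℝ≥0∞) ^ (2:ℝ)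
        = (Metric.ball a r).indicator (fun y => (‖φ y‖₊ : ℝ≥0∞) ^ (2:ℝ)) y := by
      intro y
      have hmem : y ∈ Metric.ball a r ↔ ‖a - y‖ < r := by
        rw [Metric.mem_ball, dist_eq_norm, norm_sub_rev]
      rw [Set.indicator_apply]
      by_cases h : ‖a - y‖ < r
      · rw [if_pos h, if_pos (hmem.mpr h), one_mul]
      · rw [if_neg h, if_neg (fun hc => h (hmem.mp hc)), zero_mul]
    simp_rw [hset]
    rw [lintegral_indicator measurableSet_ball]
    calc (∫⁻ y in Metric.ball a r, (‖φ y‖₊ : ℝ≥0∞) ^ (2:ℝ))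
        ≤ ∫⁻ _ in Metric.ball a r, ENNReal.ofReal (Cφ ^ 2) := by
          refine lintegral_mono fun y => ?_
          rw [← enorm_eq_nnnorm, ← ofReal_norm,
            ENNReal.ofReal_rpow_of_nonneg (norm_nonneg _) (by norm_num), Real.rpow_two]
          exact ENNReal.ofReal_le_ofReal (by nlinarith [hCφ y, norm_nonneg (φ y)])
      _ = ENNReal.ofReal (Cφ ^ 2) * volume (Metric.ball a r) := by
          rw [lintegral_const, Measure.restrict_apply_univ]
      _ ≤ ENNReal.ofReal (Cφ ^ 2) * ENNReal.ofReal (4 * r ^ 2) := by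
          gcongr
          exact aux_ball a r hr0.le
      _ = B := by rw [hB_def, ← ENNReal.ofReal_mul (by positivity)]
  have hconjsnd : AEStronglyMeasurable
      (fun q : (Fin n → Vec) × Vec => (starRingEnd ℂ) (φ q.2))
      ((volume : Measure (Fin n → Vec)).prod volume) :=
    continuous_star.comp_aestronglyMeasurable hφsm.comp_snd
  have hΨins : AEStronglyMeasurable
      (fun q : (Fin n → Vec) × Vec => Ψm (k.insertNth q.2 q.1))
      ((volume : Measure (Fin n → Vec)).prod volume) :=
    (hΨsm.comp_measurable em.measurable).aestronglyMeasurable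
  have hindpm : AEStronglyMeasurable
      (fun q : (Fin n → Vec) × Vec => (if ‖q.1 j' - q.2‖ < r then (1:ℂ) else 0))
      ((volume : Measure (Fin n → Vec)).prod volume) := by
    have hopen : IsOpen {q : (Fin n → Vec) × Vec | ‖q.1 j' - q.2‖ < r} :=
      isOpen_lt (Continuous.norm (((continuous_apply j').comp continuous_fst).sub
        continuous_snd)) continuous_const
    exact (Measurable.ite hopen.measurableSet measurable_const
      measurable_const).aestronglyMeasurable
  have hGmsm : AEStronglyMeasurable Gm volume :=
    (hconjsnd.mul hΨins).integral_prod_right'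
  have hHmsm : AEStronglyMeasurable Hm volume :=
    (hconjsnd.mul (hindpm.mul hΨins)).integral_prod_right'
  have hTsm : AEStronglyMeasurable
      (fun p : (Fin n → Vec) × Vec =>
        (if ‖p.1 j' - p.2‖ < r then (1:ℂ) else 0) * (φ p.2 * Gm p.1) - φ p.2 * Hm p.1)
      ((volume : Measure (Fin n → Vec)).prod volume) :=
    (hindpm.mul (hφsm.comp_snd.mul hGmsm.comp_fst)).sub (hφsm.comp_snd.mul hHmsm.comp_fst)
  have hTAEM : AEMeasurable
      (fun p : (Fin n → Vec) × Vec =>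
        (‖(if ‖p.1 j' - p.2‖ < r then (1:ℂ) else 0) * (φ p.2 * Gm p.1)
          - φ p.2 * Hm p.1‖₊ : ℝ≥0∞) ^ (2:ℝ))
      ((volume : Measure (Fin n → Vec)).prod volume) :=
    hTsm.enorm.pow_const _
  -- pointwise formula after change of variables
  have hTp : ∀ (z : Fin n → Vec) (y : Vec),
      ((if ‖(em (z,y)) j - (em (z,y)) k‖ < r then (1:ℂ) else 0) * pA (n+1) φ k Ψm (em (z,y))
        - pA (n+1) φ k (fun w => (if ‖w j - w k‖ < r then (1:ℂ) else 0) * Ψm w) (em (z,y)))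
      = (if ‖z j' - y‖ < r then (1:ℂ) else 0) * (φ y * Gm z) - φ y * Hm z := by
    intro z y
    rw [em_apply]
    unfold pA
    simp only [hGm_def, hHm_def, Fin.update_insertNth, Fin.insertNth_apply_same, ← hj',
      Fin.insertNth_apply_succAbove]
  -- Cauchy–Schwarz bounds
  have hG2 : ∀ z, (‖Gm z‖₊ : ℝ≥0∞) ^ (2:ℝ) ≤ I z := by
    intro z
    have h := aux_cs volume (fun y' => (starRingEnd ℂ) (φ y'))
      (fun y' => Ψm (k.insertNth y' z)) hconjAEM (hΨvAEM z)
    have hw : (∫⁻ y', (‖(starRingEnd ℂ) (φ y')‖₊ : ℝ≥0∞) ^ (2:ℝ)) = 1 := by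
      simpa using hφ1
    rw [hw, one_mul] at h
    exact h
  have hH2 : ∀ z, (‖Hm z‖₊ : ℝ≥0∞) ^ (2:ℝ) ≤ B * I z := by
    intro z
    have hwAEM : AEMeasurable
        (fun y' => (‖(starRingEnd ℂ) (φ y')
          * (if ‖z j' - y'‖ < r then (1:ℂ) else 0)‖₊ : ℝ≥0∞)) volume := by
      refine (AEStronglyMeasurable.enorm ?_ : AEMeasurable (fun y' => ‖(starRingEnd ℂ) (φ y')
          * (if ‖z j' - y'‖ < r then (1:ℂ) else 0)‖ₑ) volume)
      refine AEStronglyMeasurable.mul (continuous_star.comp_aestronglyMeasurable hφsm) ?_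
      have hopen : IsOpen {y' : Vec | ‖z j' - y'‖ < r} :=
        isOpen_lt (Continuous.norm (continuous_const.sub continuous_id)) continuous_const
      exact (Measurable.ite hopen.measurableSet measurable_const
        measurable_const).aestronglyMeasurable
    have h := aux_cs volume
      (fun y' => (starRingEnd ℂ) (φ y') * (if ‖z j' - y'‖ < r then (1:ℂ) else 0))
      (fun y' => Ψm (k.insertNth y' z)) hwAEM (hΨvAEM z)
    have hHeq : Hm z = ∫ y', ((starRingEnd ℂ) (φ y') * (if ‖z j' - y'‖ < r then (1:ℂ) else 0))
        * Ψm (k.insertNth y' z) := by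
      rw [hHm_def]
      exact integral_congr_ae (Filter.Eventually.of_forall fun y' => by ring)
    have hwint : (∫⁻ y', (‖(starRingEnd ℂ) (φ y')
        * (if ‖z j' - y'‖ < r then (1:ℂ) else 0)‖₊ : ℝ≥0∞) ^ (2:ℝ)) ≤ B := by
      refine le_trans (le_of_eq (lintegral_congr fun y' => ?_)) (hball (z j'))
      by_cases h' : ‖z j' - y'‖ < r
      · simp [h']
      · simp [h', ENNReal.rpow_two]
    rw [hHeq]
    exact h.trans (mul_le_mul_left hwint _)
  -- pointwise bound
  have hpt : ∀ (z : Fin n → Vec) (y : Vec),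
      (‖(if ‖z j' - y‖ < r then (1:ℂ) else 0) * (φ y * Gm z) - φ y * Hm z‖₊ : ℝ≥0∞) ^ (2:ℝ)
      ≤ (4 * (‖Gm z‖₊ : ℝ≥0∞) ^ (2:ℝ))
          * ((if ‖z j' - y‖ < r then (1:ℝ≥0∞) else 0) * (‖φ y‖₊ : ℝ≥0∞) ^ (2:ℝ))
        + (4 * (‖Hm z‖₊ : ℝ≥0∞) ^ (2:ℝ)) * (‖φ y‖₊ : ℝ≥0∞) ^ (2:ℝ) := by
    intro z y
    have h1 : (‖(if ‖z j' - y‖ < r then (1:ℂ) else 0) * (φ y * Gm z) - φ y * Hm z‖₊ : ℝ≥0∞)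
        ≤ (‖(if ‖z j' - y‖ < r then (1:ℂ) else 0) * (φ y * Gm z)‖₊ : ℝ≥0∞)
          + (‖φ y * Hm z‖₊ : ℝ≥0∞) := by
      exact_mod_cast nnnorm_sub_le _ _
    refine le_trans (ENNReal.rpow_le_rpow h1 two_pos.le) ?_
    refine le_trans (aux_sq_add _ _) (le_of_eq ?_)
    by_cases h' : ‖z j' - y‖ < r
    · simp only [if_pos h', one_mul, nnnorm_mul, ENNReal.coe_mul,
        ENNReal.mul_rpow_of_nonneg _ _ two_pos.le]
      ring
    · simp only [if_neg h', zero_mul, nnnorm_zero, ENNReal.coe_zero,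
        ENNReal.zero_rpow_of_pos two_pos, nnnorm_mul, ENNReal.coe_mul,
        ENNReal.mul_rpow_of_nonneg _ _ two_pos.le]
      ring
  -- inner integral bound
  have hinner : ∀ z : Fin n → Vec,
      (∫⁻ y, (‖(if ‖z j' - y‖ < r then (1:ℂ) else 0) * (φ y * Gm z)
          - φ y * Hm z‖₊ : ℝ≥0∞) ^ (2:ℝ)) ≤ 8 * B * I z := by
    intro z
    have hc1 : (4 * (‖Gm z‖₊ : ℝ≥0∞) ^ (2:ℝ)) ≠ ∞ :=
      ENNReal.mul_ne_top (by norm_num)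
        (ENNReal.rpow_ne_top_of_nonneg two_pos.le ENNReal.coe_ne_top)
    have hc2 : (4 * (‖Hm z‖₊ : ℝ≥0∞) ^ (2:ℝ)) ≠ ∞ :=
      ENNReal.mul_ne_top (by norm_num)
        (ENNReal.rpow_ne_top_of_nonneg two_pos.le ENNReal.coe_ne_top)
    have hf1AEM : AEMeasurable
        (fun y => (4 * (‖Gm z‖₊ : ℝ≥0∞) ^ (2:ℝ))
          * ((if ‖z j' - y‖ < r then (1:ℝ≥0∞) else 0) * (‖φ y‖₊ : ℝ≥0∞) ^ (2:ℝ))) volume := by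
      refine AEMeasurable.const_mul ?_ _
      refine AEMeasurable.mul ?_ hφ2AEM
      have hopen : IsOpen {y : Vec | ‖z j' - y‖ < r} :=
        isOpen_lt (Continuous.norm (continuous_const.sub continuous_id)) continuous_const
      exact (Measurable.ite hopen.measurableSet measurable_const measurable_const).aemeasurable
    calc (∫⁻ y, (‖(if ‖z j' - y‖ < r then (1:ℂ) else 0) * (φ y * Gm z)
          - φ y * Hm z‖₊ : ℝ≥0∞) ^ (2:ℝ))
        ≤ ∫⁻ y, ((4 * (‖Gm z‖₊ : ℝ≥0∞) ^ (2:ℝ))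
              * ((if ‖z j' - y‖ < r then (1:ℝ≥0∞) else 0) * (‖φ y‖₊ : ℝ≥0∞) ^ (2:ℝ))
            + (4 * (‖Hm z‖₊ : ℝ≥0∞) ^ (2:ℝ)) * (‖φ y‖₊ : ℝ≥0∞) ^ (2:ℝ)) :=
          lintegral_mono fun y => hpt z y
      _ = (4 * (‖Gm z‖₊ : ℝ≥0∞) ^ (2:ℝ))
              * (∫⁻ y, (if ‖z j' - y‖ < r then (1:ℝ≥0∞) else 0) * (‖φ y‖₊ : ℝ≥0∞) ^ (2:ℝ))
            + (4 * (‖Hm z‖₊ : ℝ≥0∞) ^ (2:ℝ)) * ∫⁻ y, (‖φ y‖₊ : ℝ≥0∞) ^ (2:ℝ) := by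
          rw [lintegral_add_left' hf1AEM, lintegral_const_mul' _ _ hc1,
            lintegral_const_mul' _ _ hc2]
      _ ≤ (4 * (‖Gm z‖₊ : ℝ≥0∞) ^ (2:ℝ)) * B + (4 * (‖Hm z‖₊ : ℝ≥0∞) ^ (2:ℝ)) * 1 := by
          gcongr
          · exact hball (z j')
          · exact le_of_eq hφ1
      _ ≤ (4 * I z) * B + (4 * (B * I z)) * 1 := by
          gcongr
          · exact hG2 z
          · exact hH2 z
      _ = 8 * B * I z := by ring
  -- Tonelli for Ψm
  have hΨm2AEM : AEMeasurable
      (fun p : (Fin n → Vec) × Vec => (‖Ψm (em p)‖₊ : ℝ≥0∞) ^ (2:ℝ))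
      ((volume : Measure (Fin n → Vec)).prod volume) :=
    ((hΨsm.measurable.comp em.measurable).nnnorm.coe_nnreal_ennreal).aemeasurable.pow_const _
  have hItot : (∫⁻ z, I z) = ∫⁻ x, (‖Ψm x‖₊ : ℝ≥0∞) ^ (2:ℝ) := by
    have h1 : (∫⁻ x, (‖Ψm x‖₊ : ℝ≥0∞) ^ (2:ℝ))
        = ∫⁻ p, (‖Ψm (em p)‖₊ : ℝ≥0∞) ^ (2:ℝ)
            ∂((volume : Measure (Fin n → Vec)).prod volume) :=
      (mpem.lintegral_comp_emb em.measurableEmbedding _).symm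
    rw [h1, lintegral_prod _ hΨm2AEM]
    exact lintegral_congr fun z => rfl
  have hΨeq : (∫⁻ x, (‖Ψm x‖₊ : ℝ≥0∞) ^ (2:ℝ)) = ∫⁻ x, (‖Ψ x‖₊ : ℝ≥0∞) ^ (2:ℝ) :=
    (lintegral_congr_ae (hae.mono fun x hx => by rw [hx])).symm
  -- constant arithmetic
  have h8B : 8 * B ≤ (ENNReal.ofReal (6 * Cφ * r)) ^ (2:ℝ) := by
    rw [ENNReal.ofReal_rpow_of_nonneg (by positivity) (by norm_num), Real.rpow_two, hB_def]
    calc (8:ℝ≥0∞) * ENNReal.ofReal (Cφ^2 * (4*r^2))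
        = ENNReal.ofReal (8 * (Cφ^2 * (4*r^2))) := by
          rw [show (8:ℝ≥0∞) = ENNReal.ofReal 8 by simp,
            ← ENNReal.ofReal_mul (by norm_num : (0:ℝ) ≤ 8)]
      _ ≤ ENNReal.ofReal ((6*Cφ*r)^2) :=
          ENNReal.ofReal_le_ofReal (by nlinarith [sq_nonneg (Cφ*r)])
  -- pointwise formula for the whole pair
  have hTp' : ∀ p : (Fin n → Vec) × Vec,
      ((if ‖(em p) j - (em p) k‖ < r then (1:ℂ) else 0) * pA (n+1) φ k Ψm (em p)
        - pA (n+1) φ k (fun w => (if ‖w j - w k‖ < r then (1:ℂ) else 0) * Ψm w) (em p))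
      = (if ‖p.1 j' - p.2‖ < r then (1:ℂ) else 0) * (φ p.2 * Gm p.1) - φ p.2 * Hm p.1 := by
    rintro ⟨z, y⟩
    exact hTp z y
  -- main estimate
  have key : (∫⁻ x, (‖(if ‖x j - x k‖ < r then (1:ℂ) else 0) * pA (n+1) φ k Ψm x
        - pA (n+1) φ k (fun z => (if ‖z j - z k‖ < r then (1:ℂ) else 0) * Ψm z) x‖₊ : ℝ≥0∞) ^ (2:ℝ))
      ≤ (ENNReal.ofReal (6 * Cφ * r)) ^ (2:ℝ) * ∫⁻ x, (‖Ψ x‖₊ : ℝ≥0∞) ^ (2:ℝ) := by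
    calc (∫⁻ x, (‖(if ‖x j - x k‖ < r then (1:ℂ) else 0) * pA (n+1) φ k Ψm x
          - pA (n+1) φ k (fun z => (if ‖z j - z k‖ < r then (1:ℂ) else 0) * Ψm z) x‖₊ : ℝ≥0∞) ^ (2:ℝ))
        = ∫⁻ p, (‖(if ‖(em p) j - (em p) k‖ < r then (1:ℂ) else 0) * pA (n+1) φ k Ψm (em p)
            - pA (n+1) φ k (fun z => (if ‖z j - z k‖ < r then (1:ℂ) else 0) * Ψm z) (em p)‖₊ : ℝ≥0∞) ^ (2:ℝ)
            ∂((volume : Measure (Fin n → Vec)).prod volume) :=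
          (mpem.lintegral_comp_emb em.measurableEmbedding _).symm
      _ = ∫⁻ p, (‖(if ‖p.1 j' - p.2‖ < r then (1:ℂ) else 0) * (φ p.2 * Gm p.1)
            - φ p.2 * Hm p.1‖₊ : ℝ≥0∞) ^ (2:ℝ)
            ∂((volume : Measure (Fin n → Vec)).prod volume) := by
          refine lintegral_congr fun p => ?_
          rw [hTp' p]
      _ = ∫⁻ z, ∫⁻ y, (‖(if ‖z j' - y‖ < r then (1:ℂ) else 0) * (φ y * Gm z)
            - φ y * Hm z‖₊ : ℝ≥0∞) ^ (2:ℝ) := lintegral_prod _ hTAEM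
      _ ≤ ∫⁻ z, 8 * B * I z := lintegral_mono fun z => hinner z
      _ = 8 * B * ∫⁻ z, I z := lintegral_const_mul' _ _ (ENNReal.mul_ne_top (by norm_num) hBne)
      _ = 8 * B * ∫⁻ x, (‖Ψ x‖₊ : ℝ≥0∞) ^ (2:ℝ) := by rw [hItot, hΨeq]
      _ ≤ (ENNReal.ofReal (6 * Cφ * r)) ^ (2:ℝ) * ∫⁻ x, (‖Ψ x‖₊ : ℝ≥0∞) ^ (2:ℝ) :=
          mul_le_mul_left h8B _
  -- conclude
  rw [eLpNorm_eq_lintegral_rpow_enorm_toReal (by norm_num) ENNReal.ofNat_ne_top,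
      eLpNorm_eq_lintegral_rpow_enorm_toReal (by norm_num) ENNReal.ofNat_ne_top]
  simp only [ENNReal.toReal_ofNat]
  calc (∫⁻ x, (‖(if ‖x j - x k‖ < r then (1:ℂ) else 0) * pA (n+1) φ k Ψm x
        - pA (n+1) φ k (fun z => (if ‖z j - z k‖ < r then (1:ℂ) else 0) * Ψm z) x‖₊ : ℝ≥0∞) ^ (2:ℝ)) ^ (1/(2:ℝ))
      ≤ ((ENNReal.ofReal (6 * Cφ * r)) ^ (2:ℝ)
          * ∫⁻ x, (‖Ψ x‖₊ : ℝ≥0∞) ^ (2:ℝ)) ^ (1/(2:ℝ)) :=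
        ENNReal.rpow_le_rpow key (by norm_num)
    _ = ENNReal.ofReal (6 * Cφ * r) * (∫⁻ x, (‖Ψ x‖₊ : ℝ≥0∞) ^ (2:ℝ)) ^ (1/(2:ℝ)) := by
        rw [ENNReal.mul_rpow_of_nonneg _ _ (by norm_num), ← ENNReal.rpow_mul]
        norm_num

end
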